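/- For any two strings S1 and S2 of equal length, CT(S1) = CT(S2) if and only if FP(S1) = FP(S2). -/

import Mathlib

open List

inductive Shape where
  | nil : Shape
  | node : Shape → Shape → Shape
deriving DecidableEq

inductive BTree (α : Type*) where
  | nil : BTree α
  | node : BTree α → α → BTree α → BTree α

def BTree.shape {α : Type*} : BTree α → Shape
  | .nil => .nil
  | .node l _ r => .node l.shape r.shape

def BTree.rootVal {α : Type*} : BTree α → Option α
  | .nil => none
  | .node _ v _ => some v

section
variable {α : Type*} [LinearOrder α] [Inhabited α]

/-- Parent-distance value at 1-based position `i` of `S`. -/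
def pdVal (S : List α) (i : ℕ) : ℕ :=
  let J := (Finset.Ico 1 i).filter (fun j => S.getD (j-1) default ≤ S.getD (i-1) default)
  if h : J.Nonempty then i - J.max' h else 0

/-- Parent-distance encoding of `S` (1-based positions). -/
def PD (S : List α) : List ℕ := (List.range S.length).map (fun k => pdVal S (k+1))

/-- 0-based index of the leftmost minimum of `S`. -/
def leftmostMinIdx (S : List α) : ℕ :=
  ((List.range S.length).argmin (fun j => S.getD j default)).getD 0

def CTaux : ℕ → List α → BTree α
  | 0, _ => .nil
  | (n+1), S =>
    if S.isEmpty then .nil else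
      let i := leftmostMinIdx S
      .node (CTaux n (S.take i)) (S.getD i default) (CTaux n (S.drop (i+1)))

/-- The (labeled) Cartesian tree of `S`. -/
def CT (S : List α) : BTree α := CTaux S.length S

/-- Front pointers of a sequence `u` of naturals (1-based positions `k ≥ 2` with `k - u[k] = 1`). -/
def frontPointers (u : List ℕ) : Finset ℕ :=
  (Finset.Icc 2 u.length).filter (fun k => k - u.getD (k-1) 0 = 1)

/-- `FP(S)[i]`: number of front pointers of `PD(S[i..])` (1-based `i`). -/
def FPval (S : List α) (i : ℕ) : ℕ := (frontPointers (PD (S.drop (i-1)))).card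

/-- The FP encoding of `S`. -/
def FP (S : List α) : List ℕ := (List.range S.length).map (fun k => FPval S (k+1))

end

namespace CTFP
open List

/-! ### Shape-level gadgets -/

/-- Length of the left spine. -/
def lspS : Shape → ℕ
  | .nil => 0
  | .node l _ => 1 + lspS l

/-- Insert a new node at depth `d` on the left spine. -/
def sprep : ℕ → Shape → Shape
  | 0, t => .node .nil t
  | (_+1), .nil => .node .nil .nil
  | (d+1), .node l r => .node (sprep d l) r

/-- Read off the first FP value from the shape. -/
def g1 : Shape → ℕ
  | .nil => 0
  | .node .nil r => lspS r
  | .node (.node l' r') _ => g1 (.node l' r')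

/-- Remove the first (inorder) node. -/
def behead : Shape → Shape
  | .nil => .nil
  | .node .nil r => r
  | .node (.node l' r') r => .node (behead (.node l' r')) r

lemma sprep_ne_nil (d : ℕ) (t : Shape) : sprep d t ≠ Shape.nil := by
  cases d <;> cases t <;> simp [sprep]

lemma g1_sprep : ∀ (d : ℕ) (t : Shape), d ≤ lspS t → g1 (sprep d t) = lspS t - d := by
  intro d
  induction d with
  | zero => intro t _; simp [sprep, g1]
  | succ d ih =>
    intro t hd
    cases t with
    | nil => simp [lspS] at hd
    | node l r =>
      have hd' : d ≤ lspS l := by simp [lspS] at hd; omega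
      have h := sprep_ne_nil d l
      cases hs : sprep d l with
      | nil => exact absurd hs h
      | node a b =>
        have : g1 (Shape.node (Shape.node a b) r) = g1 (Shape.node a b) := rfl
        rw [show sprep (d+1) (Shape.node l r) = Shape.node (sprep d l) r from rfl, hs, this,
          ← hs, ih l hd']
        simp [lspS]; omega

lemma behead_sprep : ∀ (d : ℕ) (t : Shape), behead (sprep d t) = t := by
  intro d
  induction d with
  | zero => intro t; simp [sprep, behead]
  | succ d ih =>
    intro t
    cases t with
    | nil => simp [sprep, behead]
    | node l r =>
      have h := sprep_ne_nil d l
      cases hs : sprep d l with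
      | nil => exact absurd hs h
      | node a b =>
        show behead (Shape.node (sprep d l) r) = Shape.node l r
        rw [hs]
        show Shape.node (behead (Shape.node a b)) r = Shape.node l r
        rw [← hs, ih l]

section Main
variable {α : Type*} [LinearOrder α] [Inhabited α]

/-! ### Tree-level gadgets -/

/-- Prepend an element to a Cartesian tree. -/
def prep (x : α) : BTree α → BTree α
  | .nil => .node .nil x .nil
  | .node l v r => if x ≤ v then .node .nil x (.node l v r) else .node (prep x l) v r

/-- The depth at which a prepended element ends up. -/
def dep (x : α) : BTree α → ℕ
  | .nil => 0
  | .node l v _ => if x ≤ v then 0 else dep x l + 1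

/-- Values along the left spine, top-down. -/
def spineVals : BTree α → List α
  | .nil => []
  | .node l v _ => v :: spineVals l

lemma lspS_shape (t : BTree α) : lspS t.shape = (spineVals t).length := by
  induction t with
  | nil => rfl
  | node l v r ihl ihr => simp [BTree.shape, lspS, spineVals, ihl]; omega

lemma shape_prep (x : α) (t : BTree α) : (prep x t).shape = sprep (dep x t) t.shape := by
  induction t with
  | nil => rfl
  | node l v r ihl ihr =>
    by_cases h : x ≤ v
    · simp [prep, dep, h, BTree.shape, sprep]
    · simp [prep, dep, h, BTree.shape, sprep, ihl]

lemma spineVals_prep (x : α) (t : BTree α) :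
    spineVals (prep x t) = (spineVals t).takeWhile (fun v => decide (v < x)) ++ [x] := by
  induction t with
  | nil => rfl
  | node l v r ihl ihr =>
    by_cases h : x ≤ v
    · have : ¬ (v < x) := not_lt.2 h
      simp [prep, h, spineVals, takeWhile_cons, this]
    · have : v < x := lt_of_not_ge h
      simp [prep, h, spineVals, takeWhile_cons, this, ihl]

lemma dep_eq_takeWhile (x : α) (t : BTree α) :
    dep x t = ((spineVals t).takeWhile (fun v => decide (v < x))).length := by
  induction t with
  | nil => rfl
  | node l v r ihl ihr =>
    by_cases h : x ≤ v
    · have : ¬ (v < x) := not_lt.2 h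
      simp [dep, h, spineVals, takeWhile_cons, this]
    · have : v < x := lt_of_not_ge h
      simp [dep, h, spineVals, takeWhile_cons, this, ihl]

/-! ### The leftmost-minimum index -/

lemma lmi_spec {S : List α} (h : S ≠ []) :
    leftmostMinIdx S < S.length ∧
    (∀ j < S.length, S.getD (leftmostMinIdx S) default ≤ S.getD j default) ∧
    (∀ j < S.length, S.getD j default ≤ S.getD (leftmostMinIdx S) default → leftmostMinIdx S ≤ j) := by
  classical
  set f : ℕ → α := fun j => S.getD j default with hf
  have hne : List.range S.length ≠ [] := by
    simp only [ne_eq, List.range_eq_nil]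
    intro h'
    exact h (List.length_eq_zero_iff.1 h')
  obtain ⟨m, hm⟩ : ∃ m, (List.range S.length).argmin f = some m := by
    cases h' : (List.range S.length).argmin f with
    | none => exact absurd (List.argmin_eq_none.1 h') hne
    | some m => exact ⟨m, rfl⟩
  have hmm : m ∈ (List.range S.length).argmin f := hm
  rw [List.mem_argmin_iff] at hmm
  obtain ⟨hmem, hmin, hidx⟩ := hmm
  have hmlt : m < S.length := List.mem_range.1 hmem
  have hlmi : leftmostMinIdx S = m := by
    unfold leftmostMinIdx
    rw [← hf, hm]
    rfl
  have hio : ∀ j, j < S.length → List.idxOf j (List.range S.length) = j := by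
    intro j hj
    have hj' : j ∈ List.range S.length := List.mem_range.2 hj
    have hlt : List.idxOf j (List.range S.length) < (List.range S.length).length :=
      List.idxOf_lt_length_iff.2 hj'
    have := List.getElem_idxOf hlt
    rwa [List.getElem_range] at this
  refine ⟨by rw [hlmi]; exact hmlt, ?_, ?_⟩
  · intro j hj
    rw [hlmi]
    exact hmin j (List.mem_range.2 hj)
  · intro j hj hle
    rw [hlmi] at hle ⊢
    have := hidx j (List.mem_range.2 hj) hle
    rwa [hio m hmlt, hio j hj] at this

lemma lmi_unique {S : List α} {i : ℕ} (hi : i < S.length)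
    (hmin : ∀ j < S.length, S.getD i default ≤ S.getD j default)
    (hidx : ∀ j < S.length, S.getD j default ≤ S.getD i default → i ≤ j)
    (h : S ≠ []) : leftmostMinIdx S = i := by
  obtain ⟨h1, h2, h3⟩ := lmi_spec (S := S) h
  have a1 : leftmostMinIdx S ≤ i := h3 i hi (hmin _ h1)
  have a2 : i ≤ leftmostMinIdx S := hidx _ h1 (h2 i hi)
  omega

lemma lmi_cons_of_le {x : α} {T : List α}
    (hx : ∀ j < T.length, x ≤ T.getD j default) :
    leftmostMinIdx (x :: T) = 0 := by
  apply lmi_unique (by simp) _ _ (by simp)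
  · intro j hj
    cases j with
    | zero => simp
    | succ j => simp only [List.getD_cons_zero, List.getD_cons_succ]
                exact hx j (by simpa using hj)
  · intro j _ _; omega

lemma lmi_cons_of_not_le {x : α} {T : List α} (hT : T ≠ [])
    (hx : ¬ x ≤ T.getD (leftmostMinIdx T) default) :
    leftmostMinIdx (x :: T) = leftmostMinIdx T + 1 := by
  obtain ⟨h1, h2, h3⟩ := lmi_spec (S := T) hT
  apply lmi_unique _ _ _ (by simp)
  · simpa using Nat.succ_lt_succ h1
  · intro j hj
    cases j with
    | zero =>
      simp only [List.getD_cons_succ, List.getD_cons_zero]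
      exact le_of_not_ge hx
    | succ j =>
      simp only [List.getD_cons_succ]
      exact h2 j (by simpa using hj)
  · intro j hj hle
    cases j with
    | zero =>
      simp only [List.getD_cons_succ, List.getD_cons_zero] at hle
      exact absurd (le_trans hle (h2 _ h1)) hx
    | succ j =>
      simp only [List.getD_cons_succ] at hle
      have := h3 j (by simpa using hj) hle
      omega

/-! ### CT basics -/

lemma CTaux_nil : ∀ n, CTaux n ([] : List α) = .nil := by
  intro n; cases n <;> simp [CTaux]

lemma lmi_lt {S : List α} (h : S ≠ []) : leftmostMinIdx S < S.length := (lmi_spec h).1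

lemma CTaux_congr : ∀ (m n : ℕ) (S : List α), S.length ≤ m → S.length ≤ n →
    CTaux m S = CTaux n S := by
  intro m
  induction m with
  | zero =>
    intro n S hm _
    have : S = [] := List.length_eq_zero_iff.1 (Nat.le_zero.1 hm)
    subst this
    rw [CTaux_nil, CTaux_nil]
  | succ m ih =>
    intro n S hm hn
    cases n with
    | zero =>
      have : S = [] := List.length_eq_zero_iff.1 (Nat.le_zero.1 hn)
      subst this
      rw [CTaux_nil, CTaux_nil]
    | succ n =>
      by_cases hS : S = []
      · subst hS; rw [CTaux_nil, CTaux_nil]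
      · have hE : S.isEmpty = false := by simpa using hS
        have hi := lmi_lt hS
        simp only [CTaux, hE, Bool.false_eq_true, if_false]
        congr 1
        · apply ih
          · simpa using (by omega : min (leftmostMinIdx S) S.length ≤ m)
          · simpa using (by omega : min (leftmostMinIdx S) S.length ≤ n)
        · apply ih
          · simp; omega
          · simp; omega

lemma CT_nil : CT ([] : List α) = .nil := rfl

lemma CT_eq_node {S : List α} (h : S ≠ []) :
    CT S = .node (CT (S.take (leftmostMinIdx S))) (S.getD (leftmostMinIdx S) default)
      (CT (S.drop (leftmostMinIdx S + 1))) := by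
  have hE : S.isEmpty = false := by simpa using h
  have hi := lmi_lt h
  obtain ⟨k, hk⟩ : ∃ k, S.length = k + 1 := by
    cases hl : S.length with
    | zero => exact absurd (List.length_eq_zero_iff.1 hl) h
    | succ k => exact ⟨k, rfl⟩
  unfold CT
  rw [hk]
  simp only [CTaux, hE, Bool.false_eq_true, if_false]
  congr 1
  · apply CTaux_congr <;> simp <;> omega
  · apply CTaux_congr <;> simp <;> omega

lemma CT_cons_aux : ∀ (n : ℕ) (T : List α), T.length ≤ n → ∀ x, CT (x :: T) = prep x (CT T) := by
  intro n
  induction n with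
  | zero =>
    intro T hT x
    have : T = [] := List.length_eq_zero_iff.1 (Nat.le_zero.1 hT)
    subst this
    rw [CT_eq_node (by simp), lmi_cons_of_le (by simp)]
    simp [CT_nil, prep]
  | succ n ih =>
    intro T hT x
    by_cases hTnil : T = []
    · subst hTnil
      rw [CT_eq_node (by simp), lmi_cons_of_le (by simp)]
      simp [CT_nil, prep]
    · obtain ⟨h1, h2, h3⟩ := lmi_spec (S := T) hTnil
      by_cases hx : x ≤ T.getD (leftmostMinIdx T) default
      · rw [CT_eq_node (show x :: T ≠ [] by simp),
          lmi_cons_of_le (fun j hj => le_trans hx (h2 j hj))]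
        simp only [List.take_zero, List.drop_succ_cons, List.drop_zero, List.getD_cons_zero]
        rw [CT_nil]
        conv_rhs => rw [CT_eq_node hTnil]
        simp only [prep]
        rw [if_pos hx, ← CT_eq_node hTnil]
      · rw [CT_eq_node (show x :: T ≠ [] by simp), lmi_cons_of_not_le hTnil hx]
        simp only [List.take_succ_cons, List.drop_succ_cons, List.getD_cons_succ]
        conv_rhs => rw [CT_eq_node hTnil]
        simp only [prep]
        rw [if_neg hx]
        congr 1
        apply ih
        rw [List.length_take]
        omega

lemma CT_cons (x : α) (T : List α) : CT (x :: T) = prep x (CT T) :=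
  CT_cons_aux T.length T le_rfl x

lemma spine_sorted : ∀ T : List α, (spineVals (CT T)).Pairwise (· < ·) := by
  intro T
  induction T with
  | nil => rw [CT_nil]; simp [spineVals]
  | cons x T ih =>
    rw [CT_cons, spineVals_prep]
    rw [List.pairwise_append]
    refine ⟨ih.sublist (List.takeWhile_sublist _), by simp, ?_⟩
    intro a ha b hb
    simp only [List.mem_singleton] at hb
    subst hb
    simpa using List.mem_takeWhile_imp ha


/-! ### fpf and its characterization -/

/-- The first FP value. -/
def fpf (S : List α) : ℕ := (frontPointers (PD S)).card

lemma FPval_eq_fpf (S : List α) (i : ℕ) : FPval S i = fpf (S.drop (i-1)) := rfl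

lemma PD_length (S : List α) : (PD S).length = S.length := by simp [PD]

lemma PD_getD {S : List α} {k : ℕ} (h1 : 1 ≤ k) (h2 : k ≤ S.length) :
    (PD S).getD (k-1) 0 = pdVal S k := by
  have hk : k - 1 < (PD S).length := by rw [PD_length]; omega
  rw [List.getD_eq_getElem _ _ hk]
  have : (PD S)[k-1] = pdVal S ((k-1)+1) := by simp [PD]
  rw [this]
  congr 1
  omega

lemma fp_char {S : List α} {k : ℕ} (hk2 : 2 ≤ k) (hkl : k ≤ S.length) :
    (k - pdVal S k = 1) ↔
      (S.getD 0 default ≤ S.getD (k-1) default ∧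
        ∀ j, 2 ≤ j → j < k → ¬ (S.getD (j-1) default ≤ S.getD (k-1) default)) := by
  classical
  unfold pdVal
  set J := (Finset.Ico 1 k).filter (fun j => S.getD (j-1) default ≤ S.getD (k-1) default) with hJ
  by_cases h : J.Nonempty
  · rw [dif_pos h]
    have hmem := Finset.max'_mem J h
    have hm' := Finset.mem_filter.1 hmem
    obtain ⟨hm1, hm2⟩ := Finset.mem_Ico.1 hm'.1
    have hm3 := hm'.2
    have hid : k - (k - J.max' h) = J.max' h := by omega
    constructor
    · intro hmax
      have hmax1 : J.max' h = 1 := by omega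
      rw [hmax1] at hm3
      refine ⟨by simpa using hm3, ?_⟩
      intro j hj2 hjk hle
      have hjJ : j ∈ J :=
        Finset.mem_filter.2 ⟨Finset.mem_Ico.2 ⟨by omega, hjk⟩, hle⟩
      have := Finset.le_max' J j hjJ
      omega
    · rintro ⟨hx, hall⟩
      have h1J : (1 : ℕ) ∈ J :=
        Finset.mem_filter.2 ⟨Finset.mem_Ico.2 ⟨le_refl 1, by omega⟩, by simpa using hx⟩
      have hle1 : J.max' h ≤ 1 := by
        apply Finset.max'_le
        intro y hy
        have hy' := Finset.mem_filter.1 hy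
        obtain ⟨hy1, hy2⟩ := Finset.mem_Ico.1 hy'.1
        by_contra hc
        exact hall y (by omega) hy2 hy'.2
      have hge1 : 1 ≤ J.max' h := Finset.le_max' J 1 h1J
      omega
  · rw [dif_neg h]
    constructor
    · intro h'; omega
    · rintro ⟨hx, _⟩
      exact absurd ⟨1, Finset.mem_filter.2
        ⟨Finset.mem_Ico.2 ⟨le_refl 1, by omega⟩, by simpa using hx⟩⟩ h

lemma fpf_cons (x : α) (T : List α) :
    fpf (x :: T) = ((Finset.range T.length).filter
      (fun q => (∀ r < q, T.getD q default < T.getD r default) ∧ x ≤ T.getD q default)).card := by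
  classical
  have hlen : (PD (x :: T)).length = T.length + 1 := by
    rw [PD_length]; rfl
  unfold fpf frontPointers
  rw [hlen]
  have h1 : Finset.Icc 2 (T.length + 1)
      = Finset.map (addLeftEmbedding 2) (Finset.range T.length) := by
    rw [Finset.range_eq_Ico, Finset.map_add_left_Ico, ← Finset.Ico_add_one_right_eq_Icc]
    congr 1
    omega
  rw [h1, Finset.filter_map, Finset.card_map]
  congr 1
  apply Finset.filter_congr
  intro q hq
  rw [Finset.mem_range] at hq
  have hemb : (addLeftEmbedding 2 : ℕ ↪ ℕ) q = 2 + q := rfl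
  show ((2 + q) - (PD (x :: T)).getD (2 + q - 1) 0 = 1) ↔ _
  rw [PD_getD (by omega) (by simp; omega),
    fp_char (by omega) (by simp; omega)]
  have e1 : (x :: T).getD 0 default = x := rfl
  have e2 : (x :: T).getD (2 + q - 1) default = T.getD q default := by
    have : 2 + q - 1 = q + 1 := by omega
    rw [this, List.getD_cons_succ]
  rw [e1, e2]
  constructor
  · rintro ⟨ha, hb⟩
    refine ⟨?_, ha⟩
    intro r hr
    have := hb (r + 2) (by omega) (by omega)
    have e3 : (x :: T).getD (r + 2 - 1) default = T.getD r default := by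
      have : r + 2 - 1 = r + 1 := by omega
      rw [this, List.getD_cons_succ]
    rw [e3] at this
    exact lt_of_not_ge this
  · rintro ⟨ha, hb⟩
    refine ⟨hb, ?_⟩
    intro j hj2 hjk
    obtain ⟨r, rfl⟩ : ∃ r, j = r + 2 := ⟨j - 2, by omega⟩
    have e3 : (x :: T).getD (r + 2 - 1) default = T.getD r default := by
      have : r + 2 - 1 = r + 1 := by omega
      rw [this, List.getD_cons_succ]
    rw [e3]
    exact not_le.2 (ha r (by omega))

lemma sorted_takeWhile_eq_filter {l : List α} (hl : l.Pairwise (· < ·)) (y : α) :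
    l.takeWhile (fun v => decide (v < y)) = l.filter (fun v => decide (v < y)) := by
  induction l with
  | nil => rfl
  | cons a l ih =>
    rw [List.pairwise_cons] at hl
    rw [List.takeWhile_cons, List.filter_cons]
    by_cases h : a < y
    · rw [if_pos (by simpa using h), if_pos (by simpa using h), ih hl.2]
    · rw [if_neg (by simpa using h), if_neg (by simpa using h)]
      symm
      rw [List.filter_eq_nil_iff]
      intro b hb
      simp only [decide_eq_true_eq]
      intro hby
      exact h (lt_trans (hl.1 b hb) hby)

lemma spm_count : ∀ (T : List α) (p : α → Prop) [DecidablePred p],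
    ((Finset.range T.length).filter
      (fun q => (∀ r < q, T.getD q default < T.getD r default) ∧ p (T.getD q default))).card
    = (spineVals (CT T)).countP (fun v => decide (p v)) := by
  intro T
  induction T with
  | nil =>
    intro p _
    rw [CT_nil]
    simp [spineVals]
    rfl
  | cons y T ih =>
    intro p hp
    classical
    rw [Finset.card_filter, show (y :: T).length = T.length + 1 from rfl,
      Finset.sum_range_succ']
    have iff0 : ((∀ r < 0, (y :: T).getD 0 default < (y :: T).getD r default)
        ∧ p ((y :: T).getD 0 default)) ↔ p y := by simp
    have iffsucc : ∀ q : ℕ,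
        ((∀ r < q + 1, (y :: T).getD (q+1) default < (y :: T).getD r default)
          ∧ p ((y :: T).getD (q+1) default))
        ↔ ((∀ r < q, T.getD q default < T.getD r default)
            ∧ (p (T.getD q default) ∧ T.getD q default < y)) := by
      intro q
      simp only [List.getD_cons_succ]
      constructor
      · rintro ⟨ha, hb⟩
        refine ⟨fun r hr => ?_, hb, ?_⟩
        · have := ha (r + 1) (by omega)
          rwa [List.getD_cons_succ] at this
        · have := ha 0 (by omega)
          rwa [List.getD_cons_zero] at this
      · rintro ⟨ha, hb, hc⟩
        refine ⟨?_, hb⟩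
        intro r hr
        cases r with
        | zero => rwa [List.getD_cons_zero]
        | succ r =>
          rw [List.getD_cons_succ]
          exact ha r (by omega)
    trans ((∑ q ∈ Finset.range T.length,
        if (∀ r < q, T.getD q default < T.getD r default)
          ∧ (p (T.getD q default) ∧ T.getD q default < y) then 1 else 0)
      + (if p y then 1 else 0))
    · exact congrArg₂ (· + ·)
        (Finset.sum_congr rfl (fun q _ => if_congr (iffsucc q) rfl rfl))
        (if_congr iff0 rfl rfl)
    · rw [← Finset.card_filter, ih (fun v => p v ∧ v < y)]
      rw [CT_cons, spineVals_prep, List.countP_append]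
      congr 1
      · rw [sorted_takeWhile_eq_filter (spine_sorted T) y, List.countP_filter]
        apply List.countP_congr
        intro a _
        simp [Bool.and_comm]
      · simp [List.countP_cons]

lemma fpf_cons_countP (x : α) (T : List α) :
    fpf (x :: T) = (spineVals (CT T)).countP (fun v => decide (x ≤ v)) := by
  rw [fpf_cons]
  exact spm_count T (fun v => x ≤ v)

lemma fpf_cons_eq (x : α) (T : List α) :
    fpf (x :: T) = lspS (CT T).shape - dep x (CT T) := by
  rw [fpf_cons_countP, lspS_shape, dep_eq_takeWhile,
      sorted_takeWhile_eq_filter (spine_sorted T) x, ← List.countP_eq_length_filter]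
  have h := List.length_eq_countP_add_countP (fun v => decide (v < x)) (l := spineVals (CT T))
  have hc : (spineVals (CT T)).countP (fun v => decide (x ≤ v))
      = (spineVals (CT T)).countP (fun a => decide ¬(decide (a < x)) = true) := by
    apply List.countP_congr
    intro a _
    simp [not_lt]
  omega

lemma dep_le (x : α) (T : List α) : dep x (CT T) ≤ lspS (CT T).shape := by
  rw [dep_eq_takeWhile, lspS_shape]
  exact (List.takeWhile_sublist _).length_le

lemma main_step (x : α) (T : List α) :
    (CT (x :: T)).shape = sprep (lspS (CT T).shape - fpf (x :: T)) (CT T).shape := by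
  rw [CT_cons, shape_prep]
  have h1 := fpf_cons_eq x T
  have h2 := dep_le x T
  congr 1
  omega

lemma fpf_g1 (x : α) (T : List α) : fpf (x :: T) = g1 ((CT (x :: T)).shape) := by
  rw [main_step, g1_sprep _ _ (Nat.sub_le _ _)]
  have h1 := fpf_cons_eq x T
  have h2 := dep_le x T
  omega

lemma CT_tail (x : α) (T : List α) : (CT T).shape = behead ((CT (x :: T)).shape) := by
  rw [main_step, behead_sprep]

lemma FP_nil : FP ([] : List α) = [] := rfl

lemma FP_cons (x : α) (T : List α) : FP (x :: T) = fpf (x :: T) :: FP T := by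
  unfold FP
  rw [show (x :: T).length = T.length + 1 from rfl, List.range_succ_eq_map, List.map_cons,
    List.map_map]
  congr 1

end Main
end CTFP

/-- Two equal-length strings have equal Cartesian trees iff their FP encodings
coincide. -/
theorem stmt7 {α β : Type*} [LinearOrder α] [Inhabited α] [LinearOrder β] [Inhabited β]
    (S₁ : List α) (S₂ : List β) (hlen : S₁.length = S₂.length) :
    (CT S₁).shape = (CT S₂).shape ↔ FP S₁ = FP S₂ := by
  induction S₁ generalizing S₂ with
  | nil =>
    have h2 : S₂ = [] := by
      have : S₂.length = 0 := by simpa using hlen.symm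
      exact List.length_eq_zero_iff.1 this
    subst h2
    simp [CTFP.CT_nil, CTFP.FP_nil, BTree.shape]
  | cons x S ih =>
    cases S₂ with
    | nil => simp at hlen
    | cons y T =>
      have hlen' : S.length = T.length := by simpa using hlen
      constructor
      · intro h
        rw [CTFP.FP_cons, CTFP.FP_cons]
        have hhead : CTFP.fpf (x :: S) = CTFP.fpf (y :: T) := by
          rw [CTFP.fpf_g1, CTFP.fpf_g1, h]
        have htail : (CT S).shape = (CT T).shape := by
          rw [CTFP.CT_tail x S, CTFP.CT_tail y T, h]
        rw [hhead, (ih T hlen').1 htail]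
      · intro h
        rw [CTFP.FP_cons, CTFP.FP_cons] at h
        obtain ⟨h1, h2⟩ : CTFP.fpf (x :: S) = CTFP.fpf (y :: T) ∧ FP S = FP T := by
          simpa using h
        have htail : (CT S).shape = (CT T).shape := (ih T hlen').2 h2
        rw [CTFP.main_step, CTFP.main_step, htail, h1]
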